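/- Let ρ_l be a shortfall risk measure and ρ̂_l(x) := ρ_l(x) - ρ_l(0) its normalization. Then inf_{m∈M} ρ_l(m + x) = ρ_l(x) for every x ∈ L, and consequently I(ρ̂_l) = ρ̂_l (ρ̂_l is a fixed point of the risk indifference operator); hence if ρ̂_l is a convex risk measure with ρ̂_l(0)=0 and the Fatou property, it is a good deal valuation. -/

import Mathlib

noncomputable section
open MeasureTheory Filter Topology
open scoped ENNReal

variable {Ω : Type*} [MeasurableSpace Ω]

/-- The Köthe dual of `L`: a.e.-measurable `g` such that `g * x` is integrable for
every `x ∈ L`.  This plays the role of the dual Orlicz space `L†`. -/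
def Kdual (μ : Measure Ω) (L : Set (Ω → ℝ)) : Set (Ω → ℝ) :=
  {g | AEStronglyMeasurable g μ ∧ ∀ x ∈ L, Integrable (fun ω => g ω * x ω) μ}

/-- `𝒬`: densities of probability measures `Q ≪ ℙ` with `dQ/dℙ ∈ L†` and
`E_Q[m] ≤ 0` for all `m ∈ M`. -/
def QSet (μ : Measure Ω) (L M : Set (Ω → ℝ)) : Set (Ω → ℝ) :=
  {g | g ∈ Kdual μ L ∧ 0 ≤ᵐ[μ] g ∧ (∫ ω, g ω ∂μ) = 1 ∧
    ∀ m ∈ M, (∫ ω, g ω * m ω ∂μ) ≤ 0}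

/-- `𝒬ᵉ`: elements of `𝒬` equivalent to `ℙ`, i.e. with a.e. strictly positive density. -/
def QeSet (μ : Measure Ω) (L M : Set (Ω → ℝ)) : Set (Ω → ℝ) :=
  {g | g ∈ QSet μ L M ∧ ∀ᵐ ω ∂μ, 0 < g ω}

/-- The superhedging cost `ρ⁰(x) = inf {c ∈ ℝ : ∃ m ∈ M, c + m + x ≥ 0 a.s.}`. -/
def supCost (μ : Measure Ω) (M : Set (Ω → ℝ)) (x : Ω → ℝ) : EReal :=
  sInf {c : EReal | ∃ r : ℝ, c = (r : EReal) ∧ ∃ m ∈ M, ∀ᵐ ω ∂μ, 0 ≤ r + m ω + x ω}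

/-- `ρ̂⁰(x) = sup_{Q ∈ 𝒬} E_Q[-x]`. -/
def rhoHat (μ : Measure Ω) (L M : Set (Ω → ℝ)) (x : Ω → ℝ) : EReal :=
  ⨆ g ∈ QSet μ L M, (↑(∫ ω, g ω * (-x ω) ∂μ) : EReal)

/-- `ρ` is a convex risk measure on `L`: proper, `(-∞,∞]`-valued, monotone
(w.r.t. the a.s. order), cash-invariant, and convex. -/
def IsCRM (μ : Measure Ω) (L : Set (Ω → ℝ)) (ρ : (Ω → ℝ) → EReal) : Prop :=
  ρ 0 < ⊤ ∧ (∀ x ∈ L, ρ x ≠ ⊥) ∧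
  (∀ x ∈ L, ∀ y ∈ L, x ≤ᵐ[μ] y → ρ y ≤ ρ x) ∧
  (∀ x ∈ L, ∀ c : ℝ, ρ (fun ω => x ω + c) = ρ x - (c : EReal)) ∧
  (∀ x ∈ L, ∀ y ∈ L, ∀ a : ℝ, 0 ≤ a → a ≤ 1 →
    ρ (fun ω => a * x ω + (1 - a) * y ω) ≤ (a : EReal) * ρ x + ((1 - a : ℝ) : EReal) * ρ y)

/-- The Fatou property: `ρ(-xₙ) ↑ ρ(-x_∞)` along a.s. increasing a.s. convergent sequences. -/
def HasFatou (μ : Measure Ω) (L : Set (Ω → ℝ)) (ρ : (Ω → ℝ) → EReal) : Prop :=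
  ∀ (x : ℕ → Ω → ℝ) (x' : Ω → ℝ), (∀ n, x n ∈ L) → x' ∈ L →
    (∀ᵐ ω ∂μ, Monotone (fun n => x n ω) ∧ Tendsto (fun n => x n ω) atTop (nhds (x' ω))) →
    ρ (-x') = ⨆ n, ρ (-(x n))

/-- A good deal valuation: a normalized convex risk measure with the Fatou property
whose values lie within the no-arbitrage pricing bound. -/
def IsGDV (μ : Measure Ω) (L M : Set (Ω → ℝ)) (ρ : (Ω → ℝ) → EReal) : Prop :=
  IsCRM μ L ρ ∧ ρ 0 = 0 ∧ HasFatou μ L ρ ∧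
  ∀ x ∈ L, -supCost μ M x ≤ ρ (-x) ∧ ρ (-x) ≤ supCost μ M (-x)

/-- The shortfall risk measure
`ρ_l(x) = inf {c ∈ ℝ : ∃ m ∈ M, E[l((c + m + x)⁻)] ≤ δ}`. -/
def shortfallRM (μ : Measure Ω) (M : Set (Ω → ℝ)) (l : ℝ → ℝ) (δ : ℝ)
    (x : Ω → ℝ) : EReal :=
  sInf {c : EReal | ∃ r : ℝ, c = (r : EReal) ∧ ∃ m ∈ M,
    (∫ ω, l (max (-(r + m ω + x ω)) 0) ∂μ) ≤ δ}


private lemma iInf_sub_coe_aux {ι : Sort*} (f : ι → EReal) (r : ℝ) :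
    (⨅ i, (f i - (r : EReal))) = (⨅ i, f i) - (r : EReal) := by
  apply le_antisymm
  · rw [EReal.le_sub_iff_add_le (Or.inl (EReal.coe_ne_bot r)) (Or.inl (EReal.coe_ne_top r))]
    refine le_iInf fun i => ?_
    calc (⨅ j, (f j - (r : EReal))) + (r : EReal)
        ≤ (f i - (r : EReal)) + (r : EReal) := add_le_add_left (iInf_le _ i) _
      _ = f i := EReal.sub_add_cancel
  · exact le_iInf fun i => EReal.sub_le_sub (iInf_le f i) le_rfl

private lemma shortfall_le_add {μ : Measure Ω} {M : Set (Ω → ℝ)} {l : ℝ → ℝ} {δ : ℝ}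
    (hMadd : ∀ m ∈ M, ∀ m' ∈ M, m + m' ∈ M)
    {m : Ω → ℝ} (hm : m ∈ M) (x : Ω → ℝ) :
    shortfallRM μ M l δ x ≤ shortfallRM μ M l δ (m + x) := by
  apply sInf_le_sInf
  rintro c ⟨r, rfl, m', hm', h⟩
  refine ⟨r, rfl, m' + m, hMadd m' hm' m hm, ?_⟩
  have heq : (fun ω => l (max (-(r + (m' + m) ω + x ω)) 0))
      = fun ω => l (max (-(r + m' ω + (m + x) ω)) 0) := by
    funext ω
    have : r + (m' + m) ω + x ω = r + m' ω + (m + x) ω := by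
      simp only [Pi.add_apply]; ring
    rw [this]
  rw [heq]
  exact h

/-- `inf_{m∈M} ρ_l(m + x) = ρ_l(x)` for all `x ∈ L`; consequently the
normalization `ρ̂_l = ρ_l - ρ_l(0)` is a fixed point of the risk indifference
operator, and if `ρ̂_l` is a convex risk measure with the Fatou property then it is
a good deal valuation. -/
theorem stmt_15 (μ : Measure Ω) [IsProbabilityMeasure μ]
    (L : Submodule ℝ (Ω → ℝ)) (hconst : ∀ c : ℝ, (fun _ => c) ∈ L)
    (M : Set (Ω → ℝ)) (hML : M ⊆ (L : Set (Ω → ℝ)))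
    (hMconv : Convex ℝ M)
    (hMcone : ∀ m ∈ M, ∀ c : ℝ, 0 ≤ c → c • m ∈ M)
    (hMneg : ∀ x ∈ L, x ≤ᵐ[μ] (0 : Ω → ℝ) → x ∈ M)
    (l : ℝ → ℝ) (hl0 : l 0 = 0)
    (hlmono : StrictMonoOn l (Set.Ici 0))
    (hlconv : ConvexOn ℝ (Set.Ici 0) l)
    (hlcont : ContinuousOn l (Set.Ici 0))
    (hlnn : ∀ x : ℝ, 0 ≤ x → 0 ≤ l x)
    (δ : ℝ) (hδ : 0 < δ) :
    -- `inf_{m∈M} ρ_l(m + x) = ρ_l(x)`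
    (∀ x ∈ L, (⨅ m ∈ M, shortfallRM μ M l δ (m + x)) = shortfallRM μ M l δ x) ∧
    -- the normalization is a fixed point of the risk indifference operator
    ((∃ r : ℝ, shortfallRM μ M l δ 0 = (r : EReal)) →
      ∀ x ∈ L,
        (⨅ m ∈ M, (shortfallRM μ M l δ (m + x) - shortfallRM μ M l δ 0)) -
          (⨅ m ∈ M, (shortfallRM μ M l δ m - shortfallRM μ M l δ 0)) =
        shortfallRM μ M l δ x - shortfallRM μ M l δ 0) ∧
    -- if the normalization is a Fatou convex risk measure then it is a GDV
    (∀ ρ : (Ω → ℝ) → EReal,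
      (∀ x, ρ x = shortfallRM μ M l δ x - shortfallRM μ M l δ 0) →
      IsCRM μ (L : Set (Ω → ℝ)) ρ → ρ 0 = 0 → HasFatou μ (L : Set (Ω → ℝ)) ρ →
      IsGDV μ (L : Set (Ω → ℝ)) M ρ) := by
    classical
  -- M is closed under addition
  have hMadd : ∀ m ∈ M, ∀ m' ∈ M, m + m' ∈ M := by
    intro m hm m' hm'
    have hmid : (1/2 : ℝ) • m + (1/2 : ℝ) • m' ∈ M :=
      hMconv hm hm' (by norm_num) (by norm_num) (by norm_num)
    have h2 := hMcone _ hmid 2 (by norm_num)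
    have : (2:ℝ) • ((1/2 : ℝ) • m + (1/2 : ℝ) • m') = m + m' := by
      funext ω
      simp only [Pi.add_apply, Pi.smul_apply, smul_eq_mul]
      ring
    rwa [this] at h2
  have h0M : (0 : Ω → ℝ) ∈ M := hMneg 0 L.zero_mem (ae_of_all μ fun ω => le_rfl)
  -- Part 1 (without needing x ∈ L)
  have part1 : ∀ x : Ω → ℝ,
      (⨅ m ∈ M, shortfallRM μ M l δ (m + x)) = shortfallRM μ M l δ x := by
    intro x
    apply le_antisymm
    · calc (⨅ m ∈ M, shortfallRM μ M l δ (m + x))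
          ≤ shortfallRM μ M l δ (0 + x) := iInf₂_le _ h0M
        _ = shortfallRM μ M l δ x := by rw [zero_add]
    · exact le_iInf₂ fun m hm => shortfall_le_add hMadd hm x
  -- distributing subtraction of a real constant over the double infimum
  have hsub : ∀ (s : ℝ) (f : (Ω → ℝ) → EReal),
      (⨅ m ∈ M, (f m - (s : EReal))) = (⨅ m ∈ M, f m) - (s : EReal) := by
    intro s f
    calc (⨅ m, ⨅ _ : m ∈ M, (f m - (s : EReal)))
        = ⨅ m, ((⨅ _ : m ∈ M, f m) - (s : EReal)) :=
          iInf_congr fun m => iInf_sub_coe_aux _ s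
      _ = (⨅ m, ⨅ _ : m ∈ M, f m) - (s : EReal) := iInf_sub_coe_aux _ s
  have hinf_m : (⨅ m ∈ M, shortfallRM μ M l δ m) = shortfallRM μ M l δ 0 := by
    rw [← part1 0]
    exact iInf_congr fun m => iInf_congr fun hm => by rw [add_zero]
  refine ⟨fun x _ => part1 x, ?_, ?_⟩
  · -- Part 2
    rintro ⟨s, hs⟩ x hx
    rw [hs, hsub s, hsub s, part1 x, hinf_m, hs]
    have : (s : EReal) - (s : EReal) = 0 := by
      rw [← EReal.coe_sub, sub_self, EReal.coe_zero]
    rw [this, sub_zero]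
  · -- Part 3
    intro ρ hρeq hCRM hρ0 hFatou
    refine ⟨hCRM, hρ0, hFatou, ?_⟩
    obtain ⟨_, _, hmono, hcash, _⟩ := hCRM
    -- the shortfall risk of 0 is finite
    obtain ⟨s, hs⟩ : ∃ s : ℝ, shortfallRM μ M l δ 0 = (s : EReal) := by
      have h0 : shortfallRM μ M l δ 0 - shortfallRM μ M l δ 0 = 0 := by
        rw [← hρeq 0]; exact hρ0
      have hnt : shortfallRM μ M l δ 0 ≠ ⊤ := by
        intro h; rw [h] at h0; simp at h0
      have hnb : shortfallRM μ M l δ 0 ≠ ⊥ := by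
        intro h; rw [h] at h0; simp at h0
      exact ⟨(shortfallRM μ M l δ 0).toReal, (EReal.coe_toReal hnt hnb).symm⟩
    -- ρ(-m) ≤ 0 and 0 ≤ ρ(m) for m ∈ M
    have hρ_negm : ∀ m ∈ M, ρ (-m) ≤ 0 := by
      intro m hm
      have h1 : shortfallRM μ M l δ (-m) ≤ shortfallRM μ M l δ 0 := by
        have := shortfall_le_add (μ := μ) (l := l) (δ := δ) hMadd hm (-m)
        rwa [show m + -m = (0 : Ω → ℝ) by funext ω; simp] at this
      rw [hρeq (-m), hs]
      calc shortfallRM μ M l δ (-m) - (s : EReal)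
          ≤ shortfallRM μ M l δ 0 - (s : EReal) := EReal.sub_le_sub h1 le_rfl
        _ = 0 := by rw [hs, ← EReal.coe_sub, sub_self, EReal.coe_zero]
    have hρ_m : ∀ m ∈ M, (0 : EReal) ≤ ρ m := by
      intro m hm
      have h1 : shortfallRM μ M l δ 0 ≤ shortfallRM μ M l δ m := by
        have := shortfall_le_add (μ := μ) (l := l) (δ := δ) hMadd hm 0
        rwa [show m + 0 = m by rw [add_zero]] at this
      rw [hρeq m, hs]
      calc (0 : EReal) = (s : EReal) - (s : EReal) := by
            rw [← EReal.coe_sub, sub_self, EReal.coe_zero]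
        _ ≤ shortfallRM μ M l δ m - (s : EReal) := by
            rw [← hs]; exact EReal.sub_le_sub h1 le_rfl
    intro x hx
    constructor
    · -- lower bound : -supCost μ M x ≤ ρ (-x)
      have hkey : ∀ c ∈ {c : EReal | ∃ r : ℝ, c = (r : EReal) ∧
          ∃ m ∈ M, ∀ᵐ ω ∂μ, 0 ≤ r + m ω + x ω}, -ρ (-x) ≤ c := by
        rintro c ⟨r, rfl, m, hm, hae⟩
        rw [EReal.neg_le]
        have hle : (-x) ≤ᵐ[μ] (fun ω => m ω + r) := by
          filter_upwards [hae] with ω hω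
          simp only [Pi.neg_apply]
          linarith
        have hmemL : (fun ω => m ω + r) ∈ (L : Set (Ω → ℝ)) :=
          L.add_mem (hML hm) (hconst r)
        have h1 : ρ (fun ω => m ω + r) ≤ ρ (-x) :=
          hmono _ (L.neg_mem hx) _ hmemL hle
        have h2 : ρ (fun ω => m ω + r) = ρ m - (r : EReal) := hcash m (hML hm) r
        have h3 : (-(r : EReal)) ≤ ρ m - (r : EReal) := by
          calc (-(r : EReal)) = 0 - (r : EReal) := by
                rw [← EReal.coe_zero, ← EReal.coe_neg, ← EReal.coe_sub]; norm_num
            _ ≤ ρ m - (r : EReal) := EReal.sub_le_sub (hρ_m m hm) le_rfl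
        calc (-(r : EReal)) ≤ ρ m - (r : EReal) := h3
          _ = ρ (fun ω => m ω + r) := h2.symm
          _ ≤ ρ (-x) := h1
      have := le_sInf hkey
      calc -supCost μ M x ≤ -(-ρ (-x)) := EReal.neg_le_neg_iff.mpr this
        _ = ρ (-x) := neg_neg _
    · -- upper bound : ρ (-x) ≤ supCost μ M (-x)
      apply le_sInf
      rintro c ⟨r, rfl, m, hm, hae⟩
      have hle : (fun ω => (-m) ω + (-r)) ≤ᵐ[μ] (-x) := by
        filter_upwards [hae] with ω hω
        simp only [Pi.neg_apply] at hω ⊢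
        linarith
      have hmemL : (fun ω => (-m) ω + (-r)) ∈ (L : Set (Ω → ℝ)) :=
        L.add_mem (L.neg_mem (hML hm)) (hconst (-r))
      have h1 : ρ (-x) ≤ ρ (fun ω => (-m) ω + (-r)) :=
        hmono _ hmemL _ (L.neg_mem hx) hle
      have h2 : ρ (fun ω => (-m) ω + (-r)) = ρ (-m) - ((-r : ℝ) : EReal) :=
        hcash (-m) (L.neg_mem (hML hm)) (-r)
      calc ρ (-x) ≤ ρ (-m) - ((-r : ℝ) : EReal) := h2 ▸ h1
        _ ≤ 0 - ((-r : ℝ) : EReal) := EReal.sub_le_sub (hρ_negm m hm) le_rfl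
        _ = (r : EReal) := by
            rw [← EReal.coe_zero, ← EReal.coe_sub]; norm_num
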